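/- With the cyclic monotone product ω ◁ τ defined by (ω ◁ τ)(b_0 a_1 b_1 ⋯ a_n b_n) = ω(a_1 ⋯ a_n) τ(b_1) ⋯ τ(b_{n-1}) τ(b_0 b_n) on the free product A ∗ B, the functional ω ◁ τ is positive: (ω ◁ τ)(x^∗ x) ≥ 0 for all x ∈ Dom(ω ◁ τ). -/

import Mathlib

open scoped ComplexOrder

/-- The set of words `b_0 a_1 b_1 ⋯ a_n b_n` (`n ≥ 1`, `a_i ∈ A`, `b_i ∈ B`) whose span is
the ideal generated by `A` over `B` (the domain of the cyclic monotone product). -/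
def cyclicWords {C : Type*} [Ring C] [StarRing C] [Algebra ℂ C] [StarModule ℂ C]
    (A : NonUnitalStarSubalgebra ℂ C) (B : StarSubalgebra ℂ C) : Set C :=
  {w | ∃ (n : ℕ) (a b : ℕ → C), 1 ≤ n ∧ (∀ i, a i ∈ A) ∧ (∀ i, b i ∈ B) ∧
    w = b 0 * ((List.range n).map (fun i => a (i + 1) * b (i + 1))).prod}

section Aux

variable {C : Type*} [Ring C] [StarRing C]

/-- The `a`-data of the word `star w₁ * w₂`. -/
def wordA (n : ℕ) (a a' : ℕ → C) : ℕ → C :=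
  fun ℓ => if ℓ ≤ n then star (a (n + 1 - ℓ)) else a' (ℓ - n)

/-- The `b`-data of the word `star w₁ * w₂`. -/
def wordB (n : ℕ) (b b' : ℕ → C) : ℕ → C :=
  fun ℓ => if ℓ < n then star (b (n - ℓ)) else if ℓ = n then star (b 0) * b' 0 else b' (ℓ - n)

lemma pa_rev :
    ∀ (n : ℕ) (a : ℕ → C), ((List.range n).map (fun i => star (a (n - i)))).prod
      = star (((List.range n).map (fun i => a (i + 1))).prod) := by
  intro n
  induction n with
  | zero => simp
  | succ n ih =>
    intro a
    conv_rhs => rw [List.range_succ_eq_map]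
    rw [List.range_succ, List.map_append, List.prod_append]
    have h1 : ((List.range n).map (fun i => star (a (n + 1 - i)))).prod
        = ((List.range n).map (fun i => star ((fun j => a (j + 1)) (n - i)))).prod := by
      congr 1
      apply List.map_congr_left
      intro i hi
      have : i ≤ n := Nat.le_of_lt (List.mem_range.mp hi)
      simp [Nat.succ_sub this]
    rw [h1, ih (fun j => a (j + 1))]
    simp [star_mul, mul_assoc, Function.comp_def, Nat.succ_eq_add_one]

lemma p_rev :
    ∀ (n : ℕ), 1 ≤ n → ∀ (a b : ℕ → C) (z : C),
      star (b n) * ((List.range n).map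
          (fun i => star (a (n - i)) * (if i + 1 < n then star (b (n - i - 1)) else z))).prod
      = star (((List.range n).map (fun i => a (i + 1) * b (i + 1))).prod) * z := by
  intro n hn
  induction n, hn using Nat.le_induction with
  | base =>
    intro a b z
    simp [List.range_succ, star_mul, mul_assoc]
  | succ n hn ih =>
    intro a b z
    have key : ((List.range (n+1)).map
          (fun i => star (a (n + 1 - i)) * (if i + 1 < n + 1 then star (b (n + 1 - i - 1)) else z))).prod
        = ((List.range n).map
          (fun i => star ((fun j => a (j+1)) (n - i)) *
            (if i + 1 < n then star ((fun j => b (j+1)) (n - i - 1)) else star (b 1)))).prod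
          * (star (a 1) * z) := by
      rw [List.range_succ, List.map_append, List.prod_append]
      congr 1
      · congr 1
        apply List.map_congr_left
        intro i hi
        have hi' : i < n := List.mem_range.mp hi
        have h1 : n + 1 - i = (n - i) + 1 := by omega
        have h2 : i + 1 < n + 1 := by omega
        rw [h1, if_pos h2]
        by_cases h3 : i + 1 < n
        · rw [if_pos h3]
          have e1 : n - i + 1 - 1 = (n - i - 1) + 1 := by omega
          rw [e1]
        · rw [if_neg h3]
          have e1 : n - i + 1 - 1 = 1 := by omega
          rw [e1]
      · simp
    rw [key, ← mul_assoc]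
    have hb : b (n + 1) = (fun j => b (j+1)) n := rfl
    rw [hb, ih (fun j => a (j+1)) (fun j => b (j+1)) (star (b 1))]
    conv_rhs => rw [List.range_succ_eq_map]
    simp only [List.map_cons, List.prod_cons, List.map_map, Function.comp_def,
      Nat.succ_eq_add_one, star_mul, zero_add]
    simp only [mul_assoc]

lemma word_mul (n n' : ℕ) (hn : 1 ≤ n) (a b a' b' : ℕ → C) :
    star (b 0 * ((List.range n).map (fun i => a (i + 1) * b (i + 1))).prod)
      * (b' 0 * ((List.range n').map (fun i => a' (i + 1) * b' (i + 1))).prod)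
    = wordB n b b' 0 * ((List.range (n + n')).map
        (fun i => wordA n a a' (i + 1) * wordB n b b' (i + 1))).prod := by
  rw [List.range_add, List.map_append, List.prod_append, List.map_map]
  have hP2 : ((List.range n').map ((fun i => wordA n a a' (i + 1) * wordB n b b' (i + 1)) ∘ (n + ·))).prod
      = ((List.range n').map (fun i => a' (i + 1) * b' (i + 1))).prod := by
    congr 1
    apply List.map_congr_left
    intro i _
    simp only [Function.comp_apply, wordA, wordB]
    have h1 : ¬ (n + i + 1 ≤ n) := by omega
    have h2 : ¬ (n + i + 1 < n) := by omega
    have h3 : ¬ (n + i + 1 = n) := by omega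
    have h4 : n + i + 1 - n = i + 1 := by omega
    rw [if_neg h1, if_neg h2, if_neg h3, h4]
  have hP1 : ((List.range n).map (fun i => wordA n a a' (i + 1) * wordB n b b' (i + 1))).prod
      = ((List.range n).map (fun i => star (a (n - i)) *
          (if i + 1 < n then star (b (n - i - 1)) else star (b 0) * b' 0))).prod := by
    congr 1
    apply List.map_congr_left
    intro i hi
    have hi' : i < n := List.mem_range.mp hi
    simp only [wordA, wordB]
    have h1 : i + 1 ≤ n := hi'
    have h2 : n + 1 - (i + 1) = n - i := by omega
    rw [if_pos h1, h2]
    by_cases h3 : i + 1 < n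
    · rw [if_pos h3, if_pos h3]
      congr 3
    · rw [if_neg h3, if_neg h3]
      have h4 : i + 1 = n := by omega
      rw [if_pos h4]
  have hB0 : wordB n b b' 0 = star (b n) := by
    simp only [wordB]
    rw [if_pos (show 0 < n from hn), Nat.sub_zero]
  rw [hP2, hP1, hB0, ← mul_assoc (star (b n)), p_rev n hn a b (star (b 0) * b' 0)]
  simp only [star_mul, mul_assoc]

lemma wordA_prod (n n' : ℕ) (a a' : ℕ → C) :
    ((List.range (n + n')).map (fun i => wordA n a a' (i + 1))).prod
      = star (((List.range n).map (fun i => a (i + 1))).prod)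
        * (((List.range n').map (fun i => a' (i + 1))).prod) := by
  rw [List.range_add, List.map_append, List.prod_append, List.map_map]
  congr 1
  · rw [← pa_rev n a]
    congr 1
    apply List.map_congr_left
    intro i hi
    have hi' : i < n := List.mem_range.mp hi
    simp only [wordA]
    rw [if_pos (show i + 1 ≤ n from hi')]
    congr 2
    omega
  · congr 1
    apply List.map_congr_left
    intro i _
    simp only [Function.comp_apply, wordA]
    rw [if_neg (show ¬ (n + i + 1 ≤ n) by omega)]
    congr 1
    omega

lemma wordB_prod (n n' : ℕ) (hn : 1 ≤ n) (hn' : 1 ≤ n') (b b' : ℕ → C) (τ : C → ℂ) :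
    (∏ i ∈ Finset.Ico 1 (n + n'), τ (wordB n b b' i))
      = (∏ i ∈ Finset.Ico 1 n, τ (star (b i))) * τ (star (b 0) * b' 0)
        * ∏ i ∈ Finset.Ico 1 n', τ (b' i) := by
  rw [← Finset.prod_Ico_consecutive (fun i => τ (wordB n b b' i)) (show 1 ≤ n by omega)
    (show n ≤ n + n' by omega)]
  have h1 : (∏ i ∈ Finset.Ico 1 n, τ (wordB n b b' i))
      = ∏ i ∈ Finset.Ico 1 n, τ (star (b i)) := by
    apply Finset.prod_bij (fun i _ => n - i)
    · intro i hi
      rw [Finset.mem_Ico] at hi ⊢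
      omega
    · intro i hi j hj h
      rw [Finset.mem_Ico] at hi hj
      omega
    · intro j hj
      rw [Finset.mem_Ico] at hj
      exact ⟨n - j, Finset.mem_Ico.mpr (by omega), by omega⟩
    · intro i hi
      rw [Finset.mem_Ico] at hi
      simp only [wordB]
      rw [if_pos (show i < n by omega)]
  have h2 : (∏ i ∈ Finset.Ico n (n + n'), τ (wordB n b b' i))
      = τ (star (b 0) * b' 0) * ∏ i ∈ Finset.Ico 1 n', τ (b' i) := by
    rw [Finset.prod_eq_prod_Ico_succ_bot (show n < n + n' by omega)]
    congr 1
    · simp [wordB]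
    · apply Finset.prod_bij (fun i _ => i - n)
      · intro i hi
        rw [Finset.mem_Ico] at hi ⊢
        omega
      · intro i hi j hj h
        rw [Finset.mem_Ico] at hi hj
        omega
      · intro j hj
        rw [Finset.mem_Ico] at hj
        exact ⟨j + n, Finset.mem_Ico.mpr (by omega), by omega⟩
      · intro i hi
        rw [Finset.mem_Ico] at hi
        simp only [wordB]
        rw [if_neg (show ¬ i < n by omega), if_neg (show ¬ i = n by omega)]
  rw [h1, h2, ← mul_assoc]

lemma wordB_last (n n' : ℕ) (hn' : 1 ≤ n') (b b' : ℕ → C) :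
    wordB n b b' (n + n') = b' n' := by
  simp only [wordB]
  rw [if_neg (show ¬ n + n' < n by omega), if_neg (show ¬ n + n' = n by omega)]
  congr 1
  omega

lemma wordB_zero (n : ℕ) (hn : 1 ≤ n) (b b' : ℕ → C) : wordB n b b' 0 = star (b n) := by
  simp only [wordB]
  rw [if_pos (show 0 < n from hn), Nat.sub_zero]

end Aux

lemma schur_aux {N : ℕ} (K M : Fin N → Fin N → ℂ)
    (hK : ∀ e : Fin N → ℂ, 0 ≤ ∑ i, ∑ j, (starRingEnd ℂ) (e i) * e j * K i j)
    (hM : (Matrix.of M).PosSemidef) (e : Fin N → ℂ) :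
    0 ≤ ∑ i, ∑ j, (starRingEnd ℂ) (e i) * e j * (K i j * M i j) := by
  obtain ⟨B, hB⟩ : ∃ B : Matrix (Fin N) (Fin N) ℂ, Matrix.of M = B.conjTranspose * B := by
    open scoped MatrixOrder in
    obtain ⟨X, hX, -, hXe⟩ :=
      CFC.exists_sqrt_of_isSelfAdjoint_of_quasispectrumRestricts hM.isHermitian
        (QuasispectrumRestricts.nnreal_of_nonneg hM.nonneg)
    exact ⟨X, by rw [← hXe]; exact congrArg (· * X) hX.star_eq.symm⟩
  have hMij : ∀ i j, M i j = ∑ k, (starRingEnd ℂ) (B k i) * B k j := by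
    intro i j
    have h : (Matrix.of M) i j = (B.conjTranspose * B) i j := by rw [hB]
    simpa [Matrix.mul_apply, Matrix.conjTranspose_apply, Complex.star_def] using h
  have key : ∀ i j, (starRingEnd ℂ) (e i) * e j * (K i j * M i j)
      = ∑ k, (starRingEnd ℂ) (e i * B k i) * (e j * B k j) * K i j := by
    intro i j
    rw [hMij i j, Finset.mul_sum, Finset.mul_sum]
    refine Finset.sum_congr rfl fun k _ => ?_
    simp only [map_mul]
    ring
  simp_rw [key]
  have swap : (∑ i, ∑ j, ∑ k, (starRingEnd ℂ) (e i * B k i) * (e j * B k j) * K i j)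
      = ∑ k, ∑ i, ∑ j, (starRingEnd ℂ) (e i * B k i) * (e j * B k j) * K i j := by
    exact Eq.trans (Finset.sum_congr rfl fun i _ => Finset.sum_comm) Finset.sum_comm
  rw [swap]
  exact Finset.sum_nonneg fun k _ => hK (fun i => e i * B k i)

section Gram

variable {C : Type*} [Ring C] [StarRing C] [Algebra ℂ C] [StarModule ℂ C]

lemma gram_expand {N : ℕ} (φ : C →ₗ[ℂ] ℂ) (v : Fin N → C) (e : Fin N → ℂ) :
    φ (star (∑ i, e i • v i) * (∑ j, e j • v j))
      = ∑ i, ∑ j, (starRingEnd ℂ) (e i) * e j * φ (star (v i) * v j) := by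
  rw [star_sum, Finset.sum_mul_sum, map_sum]
  refine Finset.sum_congr rfl fun i _ => ?_
  rw [map_sum]
  refine Finset.sum_congr rfl fun j _ => ?_
  rw [star_smul, smul_mul_assoc, mul_smul_comm, map_smul, map_smul]
  simp only [smul_eq_mul, Complex.star_def]
  ring

lemma gram_psd (B : StarSubalgebra ℂ C) (τ : C →ₗ[ℂ] ℂ)
    (hτstar : ∀ x : C, x ∈ B → τ (star x) = starRingEnd ℂ (τ x))
    (hτpos : ∀ x : C, x ∈ B → 0 ≤ τ (star x * x))
    {N : ℕ} (p : Fin N → C) (hp : ∀ i, p i ∈ B) :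
    (Matrix.of (fun i j => τ (star (p i) * p j))).PosSemidef := by
  refine Matrix.PosSemidef.of_dotProduct_mulVec_nonneg ?_ ?_
  · show Matrix.conjTranspose _ = _
    ext i j
    rw [Matrix.conjTranspose_apply, Matrix.of_apply, Matrix.of_apply]
    have hx : star (p i) * p j ∈ B := mul_mem (star_mem (hp i)) (hp j)
    have h := hτstar _ hx
    rw [star_mul, star_star] at h
    rw [h]
    simp [Complex.star_def]
  · intro x
    have hmem : ∑ i, x i • p i ∈ B := by
      refine Submodule.sum_mem B.toSubmodule (fun i _ => ?_)
      exact Submodule.smul_mem B.toSubmodule _ (hp i)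
    have h0 := hτpos _ hmem
    rw [gram_expand τ p x] at h0
    convert h0 using 1
    simp only [dotProduct, Matrix.mulVec, Matrix.of_apply, Pi.star_apply]
    refine Finset.sum_congr rfl fun i _ => ?_
    rw [Finset.mul_sum]
    refine Finset.sum_congr rfl fun j _ => ?_
    simp only [Complex.star_def]
    ring

omit [StarModule ℂ C] in
lemma prod_mem_word (A : NonUnitalStarSubalgebra ℂ C) :
    ∀ (n : ℕ), 1 ≤ n → ∀ (a : ℕ → C), (∀ ℓ, a ℓ ∈ A) →
      ((List.range n).map (fun i => a (i + 1))).prod ∈ A := by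
  intro n hn
  induction n, hn using Nat.le_induction with
  | base => intro a ha; simpa [List.range_succ] using ha 1
  | succ n hn ih =>
    intro a ha
    rw [List.range_succ, List.map_append, List.prod_append]
    simpa [List.range_succ] using mul_mem (ih a ha) (ha (n + 1))

end Gram

/-- The cyclic monotone product `ω ◁ τ`, defined by
`(ω ◁ τ)(b_0 a_1 b_1 ⋯ a_n b_n) = ω(a_1 ⋯ a_n) τ(b_1) ⋯ τ(b_{n-1}) τ(b_0 b_n)` on the
ideal generated by `A` over `B`, is positive: `(ω ◁ τ)(x^∗ x) ≥ 0` for all `x` in its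
domain. -/
theorem cyclicMonotoneProduct_positive
    {C : Type*} [Ring C] [StarRing C] [Algebra ℂ C] [StarModule ℂ C]
    (A : NonUnitalStarSubalgebra ℂ C) (B : StarSubalgebra ℂ C)
    (ω τ ωτ : C →ₗ[ℂ] ℂ)
    (hτ1 : τ 1 = 1)
    (hτtr : ∀ x y : C, x ∈ B → y ∈ B → τ (x * y) = τ (y * x))
    (hτstar : ∀ x : C, x ∈ B → τ (star x) = starRingEnd ℂ (τ x))
    (hτpos : ∀ x : C, x ∈ B → 0 ≤ τ (star x * x))
    (hωtr : ∀ x y : C, x ∈ A → y ∈ A → ω (x * y) = ω (y * x))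
    (hωstar : ∀ x : C, x ∈ A → ω (star x) = starRingEnd ℂ (ω x))
    (hωpos : ∀ x : C, x ∈ A → 0 ≤ ω (star x * x))
    (hdef : ∀ (n : ℕ) (a b : ℕ → C), 1 ≤ n → (∀ i, a i ∈ A) → (∀ i, b i ∈ B) →
      ωτ (b 0 * ((List.range n).map (fun i => a (i + 1) * b (i + 1))).prod)
        = ω (((List.range n).map (fun i => a (i + 1))).prod)
          * (∏ i ∈ Finset.Ico 1 n, τ (b i)) * τ (b 0 * b n)) :
    ∀ x ∈ Submodule.span ℂ (cyclicWords A B), 0 ≤ ωτ (star x * x) := by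
  intro x hx
  obtain ⟨N, c, g, hsum⟩ := Submodule.mem_span_set'.mp hx
  have hgmem : ∀ i : Fin N, ∃ (n : ℕ) (a b : ℕ → C), 1 ≤ n ∧ (∀ ℓ, a ℓ ∈ A) ∧ (∀ ℓ, b ℓ ∈ B) ∧
      (g i : C) = b 0 * ((List.range n).map (fun ℓ => a (ℓ + 1) * b (ℓ + 1))).prod :=
    fun i => (g i).2
  choose n a b hn ha hb hw using hgmem
  -- the data of each word
  set v : Fin N → C := fun i => ((List.range (n i)).map (fun ℓ => a i (ℓ + 1))).prod with hv_def
  set d : Fin N → ℂ := fun i => ∏ ℓ ∈ Finset.Ico 1 (n i), τ (b i ℓ) with hd_def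
  have hvmem : ∀ i, v i ∈ A := fun i => prod_mem_word A (n i) (hn i) (a i) (ha i)
  have memA : ∀ i j ℓ, wordA (n i) (a i) (a j) ℓ ∈ A := by
    intro i j ℓ
    unfold wordA
    split
    · exact star_mem (ha i _)
    · exact ha j _
  have memB : ∀ i j ℓ, wordB (n i) (b i) (b j) ℓ ∈ B := by
    intro i j ℓ
    unfold wordB
    split
    · exact star_mem (hb i _)
    · split
      · exact mul_mem (star_mem (hb i 0)) (hb j 0)
      · exact hb j _
  -- the cross-term formula
  have cross : ∀ i j : Fin N, ωτ (star (g i : C) * (g j : C))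
      = (starRingEnd ℂ) (d i) * d j *
        (ω (star (v i) * v j) * τ (star (b i 0) * b j 0)
          * τ (star (b i (n i)) * b j (n j))) := by
    intro i j
    rw [hw i, hw j, word_mul (n i) (n j) (hn i),
      hdef (n i + n j) (wordA (n i) (a i) (a j)) (wordB (n i) (b i) (b j))
        (by have := hn i; omega) (memA i j) (memB i j),
      wordA_prod, wordB_prod _ _ (hn i) (hn j), wordB_zero _ (hn i),
      wordB_last _ _ (hn j)]
    have hconj : (∏ ℓ ∈ Finset.Ico 1 (n i), τ (star (b i ℓ))) = (starRingEnd ℂ) (d i) := by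
      rw [hd_def, map_prod]
      exact Finset.prod_congr rfl fun ℓ _ => hτstar _ (hb i ℓ)
    rw [hconj]
    ring
  -- expansion of the quadratic form
  have hx2 : ωτ (star x * x)
      = ∑ i, ∑ j, (starRingEnd ℂ) (c i) * c j * ωτ (star (g i : C) * (g j : C)) := by
    rw [← hsum]
    exact gram_expand ωτ (fun i => (g i : C)) c
  -- positivity of the ω-Gram quadratic form
  have hK1 : ∀ e : Fin N → ℂ,
      0 ≤ ∑ i, ∑ j, (starRingEnd ℂ) (e i) * e j * ω (star (v i) * v j) := by
    intro e
    have hmem : ∑ i, e i • v i ∈ A :=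
      sum_mem fun i _ => SMulMemClass.smul_mem _ (hvmem i)
    have h0 := hωpos _ hmem
    rwa [gram_expand ω v e] at h0
  have hM1 := gram_psd B τ hτstar hτpos (fun i => b i 0) (fun i => hb i 0)
  have hM2 := gram_psd B τ hτstar hτpos (fun i => b i (n i)) (fun i => hb i (n i))
  have step2 := schur_aux
    (fun i j => ω (star (v i) * v j) * τ (star (b i 0) * b j 0))
    (fun i j => τ (star (b i (n i)) * b j (n j)))
    (fun e => schur_aux (fun i j => ω (star (v i) * v j))
      (fun i j => τ (star (b i 0) * b j 0)) hK1 hM1 e)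
    hM2 (fun i => c i * d i)
  rw [hx2]
  have heq : (∑ i, ∑ j, (starRingEnd ℂ) (c i) * c j * ωτ (star (g i : C) * (g j : C)))
      = ∑ i, ∑ j, (starRingEnd ℂ) (c i * d i) * (c j * d j) *
          (ω (star (v i) * v j) * τ (star (b i 0) * b j 0)
            * τ (star (b i (n i)) * b j (n j))) := by
    refine Finset.sum_congr rfl fun i _ => Finset.sum_congr rfl fun j _ => ?_
    rw [cross i j, map_mul (starRingEnd ℂ) (c i) (d i)]
    ring
  rw [heq]
  exact step2
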